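/- Every nonzero integer polynomial p ∈ ℤ[t] has Mahler measure M(p) ≥ 1, and if p is nonzero with M(p) = 1 then every nonzero complex root of p is a root of unity (Kronecker's theorem). -/

import Mathlib

open Polynomial

private lemma ms_one_le_prod : ∀ {s : Multiset ℝ}, (∀ x ∈ s, 1 ≤ x) → 1 ≤ s.prod := by
  intro s
  refine Multiset.induction_on s (by simp) ?_
  intro a t ih h
  rw [Multiset.prod_cons]
  have ha := h a (Multiset.mem_cons_self a t)
  have ht := ih fun x hx => h x (Multiset.mem_cons_of_mem hx)
  nlinarith

private lemma ms_prod_le_one : ∀ {s : Multiset ℝ},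
    (∀ x ∈ s, 0 ≤ x) → (∀ x ∈ s, x ≤ 1) → s.prod ≤ 1 := by
  intro s
  refine Multiset.induction_on s (by simp) ?_
  intro a t ih h0 h1
  rw [Multiset.prod_cons]
  have ha0 := h0 a (Multiset.mem_cons_self a t)
  have ha1 := h1 a (Multiset.mem_cons_self a t)
  have ht := ih (fun x hx => h0 x (Multiset.mem_cons_of_mem hx))
    (fun x hx => h1 x (Multiset.mem_cons_of_mem hx))
  have ht0 : (0:ℝ) ≤ t.prod := Multiset.prod_nonneg fun x hx => h0 x (Multiset.mem_cons_of_mem hx)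
  nlinarith

/-- The Mahler measure of a complex polynomial `p = a·∏(t − αᵢ)`:
`M(p) = |a| · ∏ max(1, |αᵢ|)`. -/
noncomputable def mahlerMeasure (p : Polynomial ℂ) : ℝ :=
  ‖p.leadingCoeff‖ * ((p.roots).map (fun z => max 1 ‖z‖)).prod

/-- Every nonzero integer polynomial has Mahler measure at least `1`, and if the Mahler
measure equals `1` then every nonzero complex root is a root of unity
(Kronecker's theorem). -/
theorem mahlerMeasure_int_ge_one_and_kronecker (p : Polynomial ℤ) (hp : p ≠ 0) :
    1 ≤ _root_.mahlerMeasure (p.map (Int.castRingHom ℂ)) ∧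
    (_root_.mahlerMeasure (p.map (Int.castRingHom ℂ)) = 1 →
      ∀ z : ℂ, z ≠ 0 → (p.map (Int.castRingHom ℂ)).IsRoot z →
        ∃ m : ℕ, 0 < m ∧ z ^ m = 1) := by
  classical
  set q := p.map (Int.castRingHom ℂ) with hqdef
  have hinj : Function.Injective (Int.castRingHom ℂ) := fun a b h => by
    have : ((a : ℤ) : ℂ) = ((b : ℤ) : ℂ) := h
    exact_mod_cast this
  have hq0 : q ≠ 0 := (Polynomial.map_ne_zero_iff hinj).mpr hp
  have hleadq : q.leadingCoeff = ((p.leadingCoeff : ℤ) : ℂ) :=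
    Polynomial.leadingCoeff_map_of_leadingCoeff_ne_zero _
      (by simpa using Polynomial.leadingCoeff_ne_zero.mpr hp)
  have hlm : (1 : ℤ) ≤ |p.leadingCoeff| := Int.one_le_abs (Polynomial.leadingCoeff_ne_zero.mpr hp)
  have hleadabs : ‖q.leadingCoeff‖ = |(p.leadingCoeff : ℝ)| := by
    rw [hleadq, Complex.norm_intCast]
  have h1 : 1 ≤ ‖q.leadingCoeff‖ := by
    rw [hleadabs]
    exact_mod_cast hlm
  have hfac : ∀ x ∈ (q.roots).map (fun z => max 1 (‖z‖)), (1:ℝ) ≤ x := by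
    intro x hx
    obtain ⟨z, _, rfl⟩ := Multiset.mem_map.mp hx
    exact le_max_left _ _
  have h2 : 1 ≤ ((q.roots).map (fun z => max 1 (‖z‖))).prod := ms_one_le_prod hfac
  constructor
  · calc (1:ℝ) = 1 * 1 := by ring
    _ ≤ _ := mul_le_mul h1 h2 one_pos.le (by linarith)
  intro hM z hz0 hzroot
  unfold _root_.mahlerMeasure at hM
  have hA : ‖q.leadingCoeff‖ = 1 := by nlinarith
  have hB : ((q.roots).map (fun z => max 1 (‖z‖))).prod = 1 := by nlinarith
  -- every root of q has abs ≤ 1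
  have hroots_le : ∀ w : ℂ, q.IsRoot w → ‖w‖ ≤ 1 := by
    intro w hw
    have hmem : w ∈ q.roots := (Polynomial.mem_roots hq0).mpr hw
    have hmem' := Multiset.mem_map_of_mem (fun z => max 1 (‖z‖)) hmem
    have hrest : 1 ≤ (((q.roots).map (fun z => max 1 (‖z‖))).erase
        (max 1 (‖w‖))).prod :=
      ms_one_le_prod fun x hx => hfac x (Multiset.mem_of_mem_erase hx)
    have hpe := Multiset.prod_erase hmem'
    have hwge : (1:ℝ) ≤ max 1 (‖w‖) := le_max_left _ _
    have : max 1 (‖w‖) = 1 := by nlinarith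
    exact (max_le_iff.mp this.le).2
  have hlead1 : |p.leadingCoeff| = 1 := by
    have := hA
    rw [hleadabs] at this
    exact_mod_cast this
  have hz_int : IsIntegral ℤ z := by
    rcases (abs_eq (by norm_num : (0:ℤ) ≤ 1)).mp hlead1 with h | h
    · exact ⟨p, by rwa [Polynomial.Monic],
        by rw [Polynomial.eval₂_eq_eval_map, algebraMap_int_eq]; exact hzroot⟩
    · refine ⟨-p, ?_, ?_⟩
      · have : (-p).leadingCoeff = 1 := by simp [h]
        rwa [Polynomial.Monic]
      · rw [Polynomial.eval₂_eq_eval_map, algebraMap_int_eq, Polynomial.map_neg,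
          Polynomial.eval_neg]
        simpa using hzroot
  set μ := minpoly ℤ z with hμdef
  have hμmonic : μ.Monic := minpoly.monic hz_int
  have hμdvd : μ ∣ p := minpoly.isIntegrallyClosed_dvd hz_int
    (by rw [Polynomial.aeval_def, ← Polynomial.eval_map]; exact hzroot)
  set μC := μ.map (Int.castRingHom ℂ) with hμCdef
  have hμCmonic : μC.Monic := hμmonic.map _
  have hμC0 : μC ≠ 0 := hμCmonic.ne_zero
  have hμCdvd : μC ∣ q := Polynomial.map_dvd _ hμdvd
  have hμroots_le : ∀ w ∈ μC.roots, ‖w‖ ≤ 1 := by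
    intro w hw
    have : q.IsRoot w := (Polynomial.isRoot_of_mem_roots hw).dvd hμCdvd
    exact hroots_le w this
  -- constant coefficient of μ is nonzero
  have hc0 : μ.coeff 0 ≠ 0 := by
    intro hc
    obtain ⟨r, hr⟩ := Polynomial.X_dvd_iff.mpr hc
    have hr0 : r ≠ 0 := by
      rintro rfl
      rw [mul_zero] at hr
      exact hμmonic.ne_zero hr
    have hrmonic : r.Monic := by
      have : μ.leadingCoeff = r.leadingCoeff := by
        rw [hr, Polynomial.leadingCoeff_mul, Polynomial.leadingCoeff_X, one_mul]
      rwa [Polynomial.Monic, ← this]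
    have haevalr : Polynomial.aeval z r = 0 := by
      have hμz := minpoly.aeval ℤ z
      rw [← hμdef, hr, map_mul, Polynomial.aeval_X] at hμz
      rcases mul_eq_zero.mp hμz with h | h
      · exact absurd h hz0
      · exact h
    have hmin := minpoly.min ℤ z hrmonic haevalr
    rw [← hμdef, hr, Polynomial.degree_mul, Polynomial.degree_X] at hmin
    rw [Polynomial.degree_eq_natDegree hr0] at hmin
    have : ((r.natDegree : ℕ) : WithBot ℕ) + 1 ≤ (r.natDegree : WithBot ℕ) := by
      exact_mod_cast add_comm (1 : WithBot ℕ) _ ▸ hmin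
    exact absurd this (by
      intro h
      have : (r.natDegree : WithBot ℕ) + 1 ≤ r.natDegree := h
      exact (Nat.not_succ_le_self r.natDegree) (by exact_mod_cast this))
  have hsplits : μC.Splits := IsAlgClosed.splits μC
  have hprodroots : ‖μC.coeff 0‖ = (μC.roots.map (fun w : ℂ => ‖w‖)).prod := by
    rw [hsplits.coeff_zero_eq_prod_roots_of_monic hμCmonic,
      norm_mul, norm_pow, norm_neg, norm_one, one_pow, one_mul]
    exact map_multiset_prod (normHom : ℂ →*₀ ℝ) _
  have hcoeff1 : 1 ≤ ‖μC.coeff 0‖ := by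
    rw [hμCdef, Polynomial.coeff_map]
    show (1:ℝ) ≤ ‖((μ.coeff 0 : ℤ) : ℂ)‖
    rw [Complex.norm_intCast]
    exact_mod_cast Int.one_le_abs hc0
  -- every root of μC has abs exactly 1
  have hμroots_eq : ∀ w ∈ μC.roots, ‖w‖ = 1 := by
    intro w hw
    have hmem' := Multiset.mem_map_of_mem (fun w : ℂ => ‖w‖) hw
    have hpe := Multiset.prod_erase hmem'
    have hrest_le : ((μC.roots.map (fun w : ℂ => ‖w‖)).erase (‖w‖)).prod ≤ 1 :=
      ms_prod_le_one
        (fun x hx => by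
          obtain ⟨u, _, rfl⟩ := Multiset.mem_map.mp (Multiset.mem_of_mem_erase hx)
          exact norm_nonneg u)
        (fun x hx => by
          obtain ⟨u, hu, rfl⟩ := Multiset.mem_map.mp (Multiset.mem_of_mem_erase hx)
          exact hμroots_le u hu)
    have hwle := hμroots_le w hw
    have hw0 : 0 ≤ ‖w‖ := norm_nonneg w
    have h1le : 1 ≤ ‖μC.coeff 0‖ := hcoeff1
    rw [hprodroots, ← hpe] at h1le
    nlinarith
  -- pass to the number field ℚ⟮z⟯
  have hzQ : IsIntegral ℚ z := hz_int.tower_top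
  let K := IntermediateField.adjoin ℚ ({z} : Set ℂ)
  haveI : FiniteDimensional ℚ K := IntermediateField.adjoin.finiteDimensional hzQ
  haveI : NumberField K := ⟨⟩
  let x : K := IntermediateField.AdjoinSimple.gen ℚ z
  have hxz : algebraMap K ℂ x = z := IntermediateField.AdjoinSimple.algebraMap_gen ℚ z
  have hx_int : IsIntegral ℤ x := by
    have := hz_int
    rwa [← hxz, isIntegral_algebraMap_iff (algebraMap K ℂ).injective] at this
  have hconj : ∀ φ : K →+* ℂ, ‖φ x‖ = 1 := by
    intro φ
    have hmem : φ x ∈ (minpoly ℚ x).rootSet ℂ := by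
      rw [← NumberField.Embeddings.range_eval_eq_rootSet_minpoly K ℂ x]
      exact ⟨φ, rfl⟩
    have hminx : minpoly ℚ x = minpoly ℚ z := by
      rw [← hxz, minpoly.algebraMap_eq (algebraMap K ℂ).injective]
    have hminz : minpoly ℚ z = μ.map (Int.castRingHom ℚ) := by
      rw [hμdef, minpoly.isIntegrallyClosed_eq_field_fractions' ℚ hz_int]
      rfl
    have hroot : Polynomial.aeval (φ x) (minpoly ℚ x) = 0 := (Polynomial.mem_rootSet.mp hmem).2
    have hrootμC : μC.IsRoot (φ x) := by
      rw [hminx, hminz] at hroot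
      rw [Polynomial.aeval_def, Polynomial.eval₂_eq_eval_map, Polynomial.map_map] at hroot
      have hcomp : (algebraMap ℚ ℂ).comp (Int.castRingHom ℚ) = Int.castRingHom ℂ := by
        ext n
        simp
      rwa [hcomp] at hroot
    have : φ x ∈ μC.roots := (Polynomial.mem_roots hμC0).mpr hrootμC
    exact hμroots_eq _ this
  obtain ⟨n, hn, hxn⟩ := NumberField.Embeddings.pow_eq_one_of_norm_eq_one K ℂ hx_int hconj
  exact ⟨n, hn, by rw [← hxz, ← map_pow, hxn, map_one]⟩
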